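/- Let L be a rigid group in the sense: (i) L is complete (trivial center and Aut L = Inn L); (ii) Hom(L^ω, S_ω) = 0; (iii) End L = Inn L ∪ {0}. Then G = L^ω satisfies: Aut G = Inn G ⋊ S_ω (with S_ω acting by coordinate permutations). -/

import Mathlib

section Stmt18Aux

variable {L : Type*} [Group L] [Nontrivial L]

/-- The `(m,n)` "matrix entry" of an automorphism of `L^ω`. -/
private def Fmap (σ : MulAut (∀ _ : ℕ, L)) (m n : ℕ) : L →* L :=
  (Pi.evalMonoidHom (fun _ : ℕ => L) m).comp
    (σ.toMonoidHom.comp (MonoidHom.mulSingle (fun _ : ℕ => L) n))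

private lemma Fmap_apply (σ : MulAut (∀ _ : ℕ, L)) (m n : ℕ) (x : L) :
    Fmap σ m n x = σ (Pi.mulSingle n x) m := rfl

private lemma exists_noncomm (hZ : Subgroup.center L = ⊥) : ∃ a b : L, a * b ≠ b * a := by
  by_contra h
  push_neg at h
  obtain ⟨a, ha⟩ := exists_ne (1 : L)
  have : a ∈ Subgroup.center L := Subgroup.mem_center_iff.mpr (fun b => h b a)
  rw [hZ, Subgroup.mem_bot] at this
  exact ha this

/-- Two distinct factors cannot both hit the same target coordinate nontrivially. -/
private lemma unique_source (hZ : Subgroup.center L = ⊥)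
    (hEnd : ∀ φ : L →* L, (∃ g : L, ∀ x : L, φ x = g⁻¹ * x * g) ∨ φ = 1)
    (σ : MulAut (∀ _ : ℕ, L)) {m n k : ℕ} (hnk : n ≠ k)
    (hn : Fmap σ m n ≠ 1) (hk : Fmap σ m k ≠ 1) : False := by
  obtain ⟨g, hg⟩ := (hEnd _).resolve_right hn
  obtain ⟨h, hh⟩ := (hEnd _).resolve_right hk
  obtain ⟨a, b, hab⟩ := exists_noncomm hZ
  have hcomm : Commute (Fmap σ m n (g * a * g⁻¹)) (Fmap σ m k (h * b * h⁻¹)) := by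
    have h1 : Commute (Pi.mulSingle n (g * a * g⁻¹) : ∀ _ : ℕ, L)
        (Pi.mulSingle k (h * b * h⁻¹) : ∀ _ : ℕ, L) :=
      Pi.mulSingle_commute hnk _ _
    exact (h1.map σ.toMonoidHom).map (Pi.evalMonoidHom (fun _ : ℕ => L) m)
  rw [hg, hh] at hcomm
  have ha' : g⁻¹ * (g * a * g⁻¹) * g = a := by group
  have hb' : h⁻¹ * (h * b * h⁻¹) * h = b := by group
  rw [ha', hb'] at hcomm
  exact hab hcomm.eq

/-- Each factor hits some target coordinate nontrivially. -/
private lemma exists_target (σ : MulAut (∀ _ : ℕ, L)) (n : ℕ) : ∃ m, Fmap σ m n ≠ 1 := by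
  obtain ⟨a, ha⟩ := exists_ne (1 : L)
  have h1 : Pi.mulSingle n a ≠ (1 : ∀ _ : ℕ, L) := by
    intro h
    have := congrFun h n
    rw [Pi.mulSingle_eq_same, Pi.one_apply] at this
    exact ha this
  have h2 : σ (Pi.mulSingle n a) ≠ 1 := by
    intro h
    exact h1 (σ.injective (h.trans (map_one σ).symm))
  obtain ⟨m, hm⟩ := Function.ne_iff.mp h2
  refine ⟨m, fun h => hm ?_⟩
  have := DFunLike.congr_fun h a
  simpa [Fmap_apply] using this

/-- If `Fmap σ m n` is inner-by-`g`, then the `m`-th coordinate of `σ x` depends only on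
the `n`-th coordinate of `x`. -/
private lemma factor (hZ : Subgroup.center L = ⊥) (σ : MulAut (∀ _ : ℕ, L)) {m n : ℕ} {g : L}
    (hg : ∀ x : L, Fmap σ m n x = g⁻¹ * x * g) (x : ∀ _ : ℕ, L) :
    σ x m = g⁻¹ * x n * g := by
  have key : ∀ y : ∀ _ : ℕ, L, y n = 1 → σ y m = 1 := by
    intro y hy
    have hc : ∀ a : L, a * σ y m = σ y m * a := by
      intro a
      have h1 : (Pi.mulSingle n (g * a * g⁻¹) : ∀ _ : ℕ, L) * y
          = y * Pi.mulSingle n (g * a * g⁻¹) := by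
        funext k
        by_cases hk : k = n
        · subst hk
          simp [hy]
        · simp [Pi.mulSingle_eq_of_ne hk]
      have h2 : σ (Pi.mulSingle n (g * a * g⁻¹)) m * σ y m
          = σ y m * σ (Pi.mulSingle n (g * a * g⁻¹)) m := by
        have := congrArg (fun z => σ z m) h1
        simpa [map_mul] using this
      have h3 : σ (Pi.mulSingle n (g * a * g⁻¹)) m = a := by
        rw [← Fmap_apply, hg]
        group
      rwa [h3] at h2
    have : σ y m ∈ Subgroup.center L := Subgroup.mem_center_iff.mpr hc
    rwa [hZ, Subgroup.mem_bot] at this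
  have hy : ((Pi.mulSingle n (x n) : ∀ _ : ℕ, L)⁻¹ * x) n = 1 := by simp
  have hx : x = (Pi.mulSingle n (x n) : ∀ _ : ℕ, L)
      * ((Pi.mulSingle n (x n) : ∀ _ : ℕ, L)⁻¹ * x) := by group
  calc σ x m = σ (Pi.mulSingle n (x n) * ((Pi.mulSingle n (x n))⁻¹ * x)) m := by rw [← hx]
    _ = σ (Pi.mulSingle n (x n)) m * σ ((Pi.mulSingle n (x n))⁻¹ * x) m := by
        rw [map_mul]; rfl
    _ = σ (Pi.mulSingle n (x n)) m * 1 := by rw [key _ hy]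
    _ = g⁻¹ * x n * g := by rw [mul_one, ← Fmap_apply, hg]

/-- The "matrix" of `σ⁻¹` is the transpose-support of that of `σ`. -/
private lemma flip_ne (hZ : Subgroup.center L = ⊥)
    (hEnd : ∀ φ : L →* L, (∃ g : L, ∀ x : L, φ x = g⁻¹ * x * g) ∨ φ = 1)
    (σ : MulAut (∀ _ : ℕ, L)) {m n : ℕ} (h : Fmap σ m n ≠ 1) : Fmap σ⁻¹ n m ≠ 1 := by
  obtain ⟨g, hg⟩ := (hEnd _).resolve_right h
  obtain ⟨a, ha⟩ := exists_ne (1 : L)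
  intro hcon
  set z := σ⁻¹ (Pi.mulSingle m (g⁻¹ * a * g) : ∀ _ : ℕ, L) with hzdef
  have h1 : σ z = Pi.mulSingle m (g⁻¹ * a * g) := by
    rw [hzdef, MulAut.inv_def]
    exact σ.apply_symm_apply _
  have h2 : σ z m = g⁻¹ * z n * g := factor hZ σ hg z
  rw [h1, Pi.mulSingle_eq_same] at h2
  have h4 : z n = a := (mul_left_cancel (mul_right_cancel h2)).symm
  have h5 : Fmap σ⁻¹ n m (g⁻¹ * a * g) = z n := rfl
  rw [hcon] at h5
  simp only [MonoidHom.one_apply] at h5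
  exact ha (h4 ▸ h5.symm)

end Stmt18Aux

/-- Let `L` be rigid: (i) complete (trivial center, all automorphisms
inner); (ii) `Hom(L^ω, S_ω) = 0`; (iii) `End L = Inn L ∪ {0}`. Then every automorphism
of `G = L^ω` factors uniquely as (conjugation by `t ∈ G`) ∘ (coordinate permutation),
i.e. `Aut G = Inn G ⋊ S_ω`. -/
theorem stmt_18 {L : Type*} [Group L] [Nontrivial L]
    (hZ : Subgroup.center L = ⊥)
    (hcomplete : ∀ φ : L ≃* L, ∃ g : L, φ = MulAut.conj g)
    (hhom : ∀ f : (∀ _ : ℕ, L) →* Equiv.Perm ℕ, f = 1)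
    (hEnd : ∀ φ : L →* L, (∃ g : L, ∀ x : L, φ x = g⁻¹ * x * g) ∨ φ = 1)
    (Φ : Equiv.Perm ℕ →* MulAut (∀ _ : ℕ, L))
    (hΦ : ∀ (π : Equiv.Perm ℕ) (x : ∀ _ : ℕ, L) (n : ℕ), Φ π x n = x (π⁻¹ n)) :
    ∀ σ : MulAut (∀ _ : ℕ, L),
      ∃! tp : (∀ _ : ℕ, L) × Equiv.Perm ℕ, σ = MulAut.conj tp.1 * Φ tp.2 := by
  intro σ
  classical
  choose p hp using exists_target (L := L) σ
  have huniq : ∀ n m, Fmap σ m n ≠ 1 → m = p n := by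
    intro n m hm
    by_contra hne
    exact unique_source hZ hEnd σ⁻¹ hne (flip_ne hZ hEnd σ hm) (flip_ne hZ hEnd σ (hp n))
  have hinj : Function.Injective p := by
    intro n k hnk
    by_contra hne
    exact unique_source hZ hEnd σ hne (hp n) (hnk ▸ hp k)
  have hsurj : Function.Surjective p := by
    intro m
    obtain ⟨n, hn⟩ := exists_target (L := L) σ⁻¹ m
    have : Fmap σ⁻¹⁻¹ m n ≠ 1 := flip_ne hZ hEnd σ⁻¹ hn
    rw [inv_inv] at this
    exact ⟨n, (huniq n m this).symm⟩
  let π : Equiv.Perm ℕ := Equiv.ofBijective p ⟨hinj, hsurj⟩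
  have hπ : ∀ n, π n = p n := fun n => rfl
  choose g hg using fun n => (hEnd (Fmap σ (p n) n)).resolve_right (hp n)
  let t : ∀ _ : ℕ, L := fun m => (g (π.symm m))⁻¹
  -- the key coordinate formula for σ
  have hσcoord : ∀ (x : ∀ _ : ℕ, L) (m : ℕ),
      σ x m = (g (π.symm m))⁻¹ * x (π.symm m) * g (π.symm m) := by
    intro x m
    have hpm : p (π.symm m) = m := π.apply_symm_apply m
    have hg' : ∀ y : L, Fmap σ m (π.symm m) y
        = (g (π.symm m))⁻¹ * y * g (π.symm m) := by
      intro y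
      have := hg (π.symm m) y
      rwa [hpm] at this
    exact factor hZ σ hg' x
  have hmain : σ = MulAut.conj t * Φ π := by
    ext x m
    rw [MulAut.mul_apply, MulAut.conj_apply]
    have h1 : (t * Φ π x * t⁻¹) m = t m * (Φ π x) m * (t m)⁻¹ := rfl
    rw [h1, hΦ]
    have h2 : (π⁻¹ : Equiv.Perm ℕ) m = π.symm m := rfl
    rw [h2, hσcoord x m]
    simp only [t, inv_inv]
  refine ⟨(t, π), hmain, ?_⟩
  rintro ⟨t', π'⟩ h'
  have heq : ∀ (x : ∀ _ : ℕ, L) (m : ℕ),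
      t' m * x (π'.symm m) * (t' m)⁻¹ = t m * x (π.symm m) * (t m)⁻¹ := by
    intro x m
    have := congrArg (fun τ : MulAut (∀ _ : ℕ, L) => τ x m) (h'.symm.trans hmain)
    simpa only [MulAut.mul_apply, MulAut.conj_apply, Pi.mul_apply, Pi.inv_apply, hΦ, Equiv.Perm.inv_def]
      using this
  obtain ⟨a, ha⟩ := exists_ne (1 : L)
  have hπeq : π' = π := by
    have hsymm : π'.symm = π.symm := by
      ext m
      by_contra hne
      have := heq (Pi.mulSingle (π.symm m) a) m
      rw [Pi.mulSingle_eq_same, Pi.mulSingle_eq_of_ne hne] at this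
      simp only [mul_one] at this
      rw [mul_inv_cancel] at this
      refine ha ?_
      have h7 : a = (t m)⁻¹ * (t m * a * (t m)⁻¹) * t m := by group
      rw [← this] at h7
      simpa using h7
    calc π' = π'.symm.symm := rfl
      _ = π.symm.symm := by rw [hsymm]
      _ = π := rfl
  subst hπeq
  have hteq : t' = t := by
    funext m
    have hc : ∀ b : L, b * ((t m)⁻¹ * t' m) = ((t m)⁻¹ * t' m) * b := by
      intro b
      have := heq (Pi.mulSingle (π.symm m) b) m
      rw [Pi.mulSingle_eq_same] at this
      -- t' m * b * (t' m)⁻¹ = t m * b * (t m)⁻¹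
      have h6 : (t m)⁻¹ * (t' m * b * (t' m)⁻¹) * t m = b := by rw [this]; group
      calc b * ((t m)⁻¹ * t' m)
          = ((t m)⁻¹ * (t' m * b * (t' m)⁻¹) * t m) * ((t m)⁻¹ * t' m) := by rw [h6]
        _ = ((t m)⁻¹ * t' m) * b := by group
    have : (t m)⁻¹ * t' m ∈ Subgroup.center L := Subgroup.mem_center_iff.mpr hc
    rw [hZ, Subgroup.mem_bot] at this
    have := congrArg (fun z => t m * z) this
    simpa using this
  rw [hteq]
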